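/- Pigeonhole for the jump-coding coloring: for every ordinal β in the notation system, every infinite homogeneous set H for the coloring c_{β+3} has color 1. (Proof idea: pick a_0 < a_1 < ... < a_{(a_0)^2+2} in H followed by a β-size subset s of H; if all triples were colored 0, each consecutive pair (a_i, a_{i+1}) would be separated by a distinct pair (e,x) with e,x < a_0, but there are at most (a_0)^2 such pairs.) -/

import Mathlib

open Ordinal

/-- The maximum of a list of naturals (0 for the empty list). -/
def listMax (s : List ℕ) : ℕ := s.foldr max 0

/-- `t` (as an increasing sequence) is `α`-large. -/
def LargeL (F : Ordinal → ℕ → Ordinal) (α : Ordinal) (t : List ℕ) : Prop :=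
  t.foldl F α = 0

/-- `t` is exactly `α`-large (`α`-size). -/
def SizeL (F : Ordinal → ℕ → Ordinal) (α : Ordinal) (t : List ℕ) : Prop :=
  LargeL F α t ∧ (t ≠ [] → ¬ LargeL F α t.dropLast)

/-- `Y^s_β = {y ≤ max s : M_β(y,s) accepts}`. -/
def Yset (M : Ordinal → ℕ → List ℕ → Prop) (β : Ordinal) (s : List ℕ) : Set ℕ :=
  {y | y ≤ listMax s ∧ M β y s}

/-- Existence of α-size subsets of an infinite set above any bound. -/
lemma exists_size (F : Ordinal → ℕ → Ordinal)
    (hself : ∀ (α : Ordinal) (n : ℕ), α ≠ 0 → F α n < α)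
    (H : Set ℕ) (hH : H.Infinite) :
    ∀ α : Ordinal, ∀ m : ℕ, ∃ t : List ℕ, t.Pairwise (· < ·) ∧ (∀ x ∈ t, x ∈ H) ∧
      (∀ x ∈ t, m < x) ∧ SizeL F α t := by
  intro α
  induction α using Ordinal.induction with
  | h α ih =>
    intro m
    by_cases hα : α = 0
    · subst hα
      exact ⟨[], List.Pairwise.nil, by simp, by simp, ⟨rfl, by simp⟩⟩
    · obtain ⟨a, haH, ham⟩ := hH.exists_gt m
      obtain ⟨t, hsort, htH, hgt, hlarge, hmin⟩ := ih (F α a) (hself α a hα) a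
      refine ⟨a :: t, List.pairwise_cons.mpr ⟨hgt, hsort⟩, ?_, ?_, ?_, ?_⟩
      · intro x hx
        rcases List.mem_cons.mp hx with rfl | h
        · exact haH
        · exact htH _ h
      · intro x hx
        rcases List.mem_cons.mp hx with rfl | h
        · exact ham
        · exact ham.trans (hgt _ h)
      · show List.foldl F α (a :: t) = 0
        simpa [List.foldl, LargeL] using hlarge
      · intro _
        cases t with
        | nil =>
          intro hcon
          exact hα hcon
        | cons b t' =>
          intro hcon
          apply hmin (by simp)
          simpa [LargeL, List.foldl] using hcon

/-- Prepending three elements to a `β`-size set gives a `(β+3)`-size set. -/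
lemma size_cons3 (F : Ordinal → ℕ → Ordinal)
    (hsucc : ∀ (α : Ordinal) (n : ℕ), F (α + 1) n = α)
    (β : Ordinal) (a0 a1 a2 : ℕ) (s : List ℕ) (hs : SizeL F β s) :
    SizeL F (β + 3) (a0 :: a1 :: a2 :: s) := by
  have e3 : (β + 3 : Ordinal) = (β + 2) + 1 := by
    rw [add_assoc]; norm_num
  have e2 : (β + 2 : Ordinal) = (β + 1) + 1 := by
    rw [add_assoc]; norm_num
  have hF3 : F (β + 3) a0 = β + 2 := by rw [e3, hsucc]
  have hF2 : F (β + 2) a1 = β + 1 := by rw [e2, hsucc]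
  have hF1 : F (β + 1) a2 = β := hsucc β a2
  constructor
  · show List.foldl F (β + 3) (a0 :: a1 :: a2 :: s) = 0
    simp only [List.foldl_cons, hF3, hF2, hF1]
    exact hs.1
  · intro _
    cases s with
    | nil =>
      show ¬ List.foldl F (β + 3) [a0, a1] = 0
      simp only [List.foldl_cons, List.foldl_nil, hF3, hF2]
      have hpos : (0 : Ordinal) < β + 1 := lt_of_lt_of_le zero_lt_one (le_add_self : (1 : Ordinal) ≤ β + 1)
      exact hpos.ne'
    | cons b s' =>
      intro hcon
      apply hs.2 (by simp)
      show List.foldl F β (b :: s').dropLast = 0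
      simpa only [LargeL, List.dropLast_cons₂, List.foldl_cons, hF3, hF2, hF1] using hcon

/-- Pigeonhole for the jump-coding coloring: every infinite homogeneous set for the
coloring `c_{β+3}` has color `1`.  Here `HBx e x Y b` abstracts "`{e}^Y(x)` halts with
computation code below `b`", and `c` is any coloring satisfying the defining property
of `c_{β+3}` on `(β+3)`-size sets `⟨a₀,a₁,a₂⟩⌢s`. -/
theorem homogeneous_set_has_color_one
    (F : Ordinal → ℕ → Ordinal)
    (h0 : ∀ n : ℕ, F 0 n = 0)
    (hsucc : ∀ (α : Ordinal) (n : ℕ), F (α + 1) n = α)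
    (hself : ∀ (α : Ordinal) (n : ℕ), α ≠ 0 → F α n < α)
    (A : Set ℕ)
    (M : Ordinal → ℕ → List ℕ → Prop)
    (HBx : ℕ → ℕ → Set ℕ → ℕ → Prop)
    (hHBmono : ∀ (e x : ℕ) (Y : Set ℕ) (b b' : ℕ), b ≤ b' → HBx e x Y b → HBx e x Y b')
    (β : Ordinal)
    (c : List ℕ → Fin 2)
    (hc : ∀ (a0 a1 a2 : ℕ) (s : List ℕ), SizeL F (β + 3) (a0 :: a1 :: a2 :: s) →
      (c (a0 :: a1 :: a2 :: s) = 1 ↔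
        ∀ e x : ℕ, e < a0 → x < a0 →
          (HBx e x (Yset M β s) a1 ↔ HBx e x (Yset M β s) a2)))
    (H : Set ℕ) (hH : H.Infinite)
    (i : Fin 2)
    (hhom : ∀ u : List ℕ, u.Pairwise (· < ·) → (∀ x ∈ u, x ∈ H) →
      SizeL F (β + 3) u → c u = i) :
    i = 1 := by
  by_contra hi1
  -- an increasing sequence in H
  set f : ℕ → ℕ := fun n => Nat.rec (Classical.choose (hH.exists_gt 0))
    (fun _ prev => Classical.choose (hH.exists_gt prev)) n with hf
  have hf0 : f 0 ∈ H := (Classical.choose_spec (hH.exists_gt 0)).1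
  have hfsucc : ∀ n, f (n + 1) ∈ H ∧ f n < f (n + 1) := by
    intro n
    exact Classical.choose_spec (hH.exists_gt (f n))
  have hfmem : ∀ n, f n ∈ H := by
    intro n; cases n with
    | zero => exact hf0
    | succ k => exact (hfsucc k).1
  have hfmono : StrictMono f := strictMono_nat_of_lt_succ (fun n => (hfsucc n).2)
  set a0 : ℕ := f 0 with ha0
  set n : ℕ := a0 * a0 with hn
  -- the β-size tail
  obtain ⟨s, hssort, hsH, hsgt, hssize⟩ :=
    exists_size F hself H hH β (f (n + 2))
  set Y : Set ℕ := Yset M β s with hY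
  -- for each j, the colored triple
  have key : ∀ j : ℕ, j < n + 1 → ∃ e x : ℕ, e < a0 ∧ x < a0 ∧
      ¬ HBx e x Y (f (j + 1)) ∧ HBx e x Y (f (j + 2)) := by
    intro j hj
    set u : List ℕ := a0 :: f (j + 1) :: f (j + 2) :: s with hu
    have husize : SizeL F (β + 3) u := size_cons3 F hsucc β _ _ _ s hssize
    have husort : u.Pairwise (· < ·) := by
      have h3 : ∀ x ∈ s, f (j + 2) < x := by
        intro x hx
        exact lt_of_le_of_lt (hfmono.monotone (show j + 2 ≤ n + 2 by omega)) (hsgt x hx)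
      refine List.pairwise_cons.mpr ⟨?_, List.pairwise_cons.mpr ⟨?_, List.pairwise_cons.mpr ⟨h3, hssort⟩⟩⟩
      · intro b hb
        rcases List.mem_cons.mp hb with rfl | hb
        · exact hfmono (show 0 < j + 1 by omega)
        · rcases List.mem_cons.mp hb with rfl | hb
          · exact hfmono (show 0 < j + 2 by omega)
          · exact lt_trans (hfmono (show (0:ℕ) < j + 2 by omega)) (h3 _ hb)
      · intro b hb
        rcases List.mem_cons.mp hb with rfl | hb
        · exact hfmono (show j + 1 < j + 2 by omega)
        · exact lt_trans (hfmono (show j + 1 < j + 2 by omega)) (h3 _ hb)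
    have humem : ∀ x ∈ u, x ∈ H := by
      intro x hx
      rcases List.mem_cons.mp hx with rfl | hx
      · exact hf0
      · rcases List.mem_cons.mp hx with rfl | hx
        · exact hfmem (j + 1)
        · rcases List.mem_cons.mp hx with rfl | hx
          · exact hfmem (j + 2)
          · exact hsH _ hx
    have hcu : c u = i := hhom u husort humem husize
    have hcu0 : c u ≠ 1 := by rw [hcu]; exact hi1
    have := (hc a0 (f (j + 1)) (f (j + 2)) s husize).not.mp hcu0
    push_neg at this
    obtain ⟨e, x, he, hx, hne⟩ := this
    rcases hne with ⟨hP, hnQ⟩ | ⟨hnP, hQ⟩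
    · exact absurd (hHBmono e x Y _ _ (le_of_lt (hfmono (show j + 1 < j + 2 by omega))) hP) hnQ
    · exact ⟨e, x, he, hx, hnP, hQ⟩
  -- injective map into Fin a0 × Fin a0
  choose! E X hE hX hnot hyes using key
  have hEX : Function.Injective (fun j : Fin (n + 1) =>
      ((⟨E j, hE j j.isLt⟩, ⟨X j, hX j j.isLt⟩) : Fin a0 × Fin a0)) := by
    intro j k hjk
    simp only [Prod.mk.injEq, Fin.mk.injEq] at hjk
    by_contra hne
    have hne' : (j : ℕ) ≠ (k : ℕ) := fun h => hne (Fin.ext h)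
    rcases hne'.lt_or_gt with h | h
    · have h1 : HBx (E j) (X j) Y (f (j + 2)) := hyes j j.isLt
      have h2 : ¬ HBx (E j) (X j) Y (f (k + 1)) := by
        rw [hjk.1, hjk.2]; exact hnot k k.isLt
      exact h2 (hHBmono _ _ _ _ _ (hfmono.monotone (show (j:ℕ) + 2 ≤ (k:ℕ) + 1 by omega)) h1)
    · have h1 : HBx (E k) (X k) Y (f (k + 2)) := hyes k k.isLt
      have h2 : ¬ HBx (E k) (X k) Y (f (j + 1)) := by
        rw [← hjk.1, ← hjk.2]; exact hnot j j.isLt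
      exact h2 (hHBmono _ _ _ _ _ (hfmono.monotone (show (k:ℕ) + 2 ≤ (j:ℕ) + 1 by omega)) h1)
  have hcard := Fintype.card_le_of_injective _ hEX
  simp only [Fintype.card_prod, Fintype.card_fin] at hcard
  omega
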